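/- arXiv:1107.5282 — 2 statements merged into one kernel-verified Lean document; each statement's English description precedes it below -/
import Mathlib

section
/- Let V be an inner product space over ℂ, let U be a positive integer, let f : ℕ → V, and let g : ℕ → ℝ be such that g(d) > 0 for every divisor d of U and ⟨f_u, f_v⟩ = ∑_{d ∣ gcd(u,v)} g(d) for all divisors u, v of U. For a divisor u of U define f'_u = ∑_{j ∣ u} μ(u/j)·f_j, where μ is the Möbius function. Then for all divisors u, v of U one has ⟨f'_u, f'_v⟩ = g(u) if u = v and ⟨f'_u, f'_v⟩ = 0 if u ≠ v; in particular the family {f'_u : u ∣ U} consists of pairwise orthogonal nonzero vectors and is linearly independent. -/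
open scoped InnerProductSpace
open ArithmeticFunction
open scoped ArithmeticFunction.Moebius
open Finset

lemma sum_moebius_indicator (u d : ℕ) (hu : u ≠ 0) :
    (∑ i ∈ u.divisors, if d ∣ i then ((μ (u / i) : ℤ) : ℂ) else 0)
      = if d = u then 1 else 0 := by
  by_cases hdu : d ∣ u
  · have h1 : (∑ i ∈ u.divisors, if d ∣ i then ((μ (u / i) : ℤ) : ℂ) else 0)
        = ∑ e ∈ u.divisors, if e ∣ u / d then ((μ e : ℤ) : ℂ) else 0 := by
      rw [← Nat.sum_div_divisors u (fun i => if d ∣ i then ((μ (u / i) : ℤ) : ℂ) else 0)]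
      refine Finset.sum_congr rfl fun e he => ?_
      have heu : e ∣ u := (Nat.mem_divisors.mp he).1
      have h2 : u / (u / e) = e := Nat.div_div_self heu hu
      have h3 : (d ∣ u / e) ↔ (e ∣ u / d) := by
        rw [Nat.dvd_div_iff_mul_dvd heu, Nat.dvd_div_iff_mul_dvd hdu, mul_comm]
      simp only [h2, h3]
    rw [h1]
    have hsub : (u / d).divisors ⊆ u.divisors :=
      Nat.divisors_subset_of_dvd hu (Nat.div_dvd_of_dvd hdu)
    have hud0 : u / d ≠ 0 := by
      intro h
      exact hu (by simpa [h] using (Nat.div_mul_cancel hdu).symm)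
    have h4 : (∑ e ∈ u.divisors, if e ∣ u / d then ((μ e : ℤ) : ℂ) else 0)
        = ∑ e ∈ (u / d).divisors, ((μ e : ℤ) : ℂ) := by
      rw [← Finset.sum_subset hsub]
      · refine Finset.sum_congr rfl fun e he => ?_
        simp [Nat.mem_divisors.mp he |>.1]
      · intro e _ he2
        rw [if_neg]
        intro hed
        exact he2 (Nat.mem_divisors.mpr ⟨hed, hud0⟩)
    rw [h4]
    have h5 : (∑ e ∈ (u / d).divisors, ((μ e : ℤ) : ℂ)) = if u / d = 1 then 1 else 0 := by
      have h5' := congrArg (fun F : ArithmeticFunction ℤ => F (u / d)) moebius_mul_coe_zeta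
      simp only [coe_mul_zeta_apply, ArithmeticFunction.one_apply] at h5'
      have := congrArg (fun z : ℤ => (z : ℂ)) h5'
      push_cast at this
      simpa [apply_ite (fun z : ℤ => (z : ℂ))] using this
    have h6 : (u / d = 1) ↔ (d = u) := by
      constructor
      · intro h
        have := Nat.div_mul_cancel hdu
        rw [h, one_mul] at this
        exact this
      · intro h
        subst h
        exact Nat.div_self (Nat.pos_of_ne_zero hu)
    rw [h5]
    simp [h6]
  · rw [if_neg (by rintro rfl; exact hdu dvd_rfl)]
    refine Finset.sum_eq_zero fun i hi => ?_
    rw [if_neg]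
    intro hdi
    exact hdu (hdi.trans (Nat.mem_divisors.mp hi).1)

theorem moebius_orthogonalization
    (V : Type*) [NormedAddCommGroup V] [InnerProductSpace ℂ V]
    (U : ℕ) (hU : 0 < U) (f : ℕ → V) (g : ℕ → ℝ)
    (hg : ∀ d : ℕ, d ∣ U → 0 < g d)
    (hfg : ∀ u v : ℕ, u ∣ U → v ∣ U →
      ⟪f u, f v⟫_ℂ = ∑ d ∈ (Nat.gcd u v).divisors, (g d : ℂ))
    (f' : ℕ → V)
    (hf' : ∀ u : ℕ, u ∣ U → f' u = ∑ j ∈ u.divisors, ((μ (u / j) : ℤ) : ℂ) • f j) :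
    (∀ u v : ℕ, u ∣ U → v ∣ U →
        ⟪f' u, f' v⟫_ℂ = if u = v then (g u : ℂ) else 0) ∧
      (∀ u : ℕ, u ∣ U → f' u ≠ 0) ∧
      LinearIndependent ℂ (fun u : {u : ℕ // u ∣ U} => f' u.val) := by
  have hU0 : U ≠ 0 := hU.ne'
  have hmain : ∀ u v : ℕ, u ∣ U → v ∣ U →
      ⟪f' u, f' v⟫_ℂ = if u = v then (g u : ℂ) else 0 := by
    intro u v huU hvU
    have hu0 : u ≠ 0 := fun h => hU0 (by simpa [h] using huU)
    have hv0 : v ≠ 0 := fun h => hU0 (by simpa [h] using hvU)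
    rw [hf' u huU, hf' v hvU, sum_inner]
    have step1 : ∀ i ∈ u.divisors,
        ⟪((μ (u / i) : ℤ) : ℂ) • f i, ∑ j ∈ v.divisors, ((μ (v / j) : ℤ) : ℂ) • f j⟫_ℂ
          = ∑ d ∈ U.divisors, ∑ j ∈ v.divisors,
              (if d ∣ i then ((μ (u / i) : ℤ) : ℂ) else 0) *
              ((if d ∣ j then ((μ (v / j) : ℤ) : ℂ) else 0) * (g d : ℂ)) := by
      intro i hi
      have hiU : i ∣ U := (Nat.mem_divisors.mp hi).1.trans huU
      have hi0 : i ≠ 0 := fun h => hU0 (by simpa [h] using hiU)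
      rw [inner_sum]
      rw [Finset.sum_comm]
      refine Finset.sum_congr rfl fun j hj => ?_
      have hjU : j ∣ U := (Nat.mem_divisors.mp hj).1.trans hvU
      rw [inner_smul_left, inner_smul_right, hfg i j hiU hjU]
      have hgij : (∑ d ∈ (Nat.gcd i j).divisors, (g d : ℂ))
          = ∑ d ∈ U.divisors, if d ∣ i ∧ d ∣ j then (g d : ℂ) else 0 := by
        rw [← Finset.sum_subset
            (Nat.divisors_subset_of_dvd hU0 ((Nat.gcd_dvd_left i j).trans hiU))]
        · refine Finset.sum_congr rfl fun d hd => ?_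
          have := Nat.mem_divisors.mp hd
          rw [if_pos ⟨(this.1.trans (Nat.gcd_dvd_left i j)),
              (this.1.trans (Nat.gcd_dvd_right i j))⟩]
        · intro d _ hd2
          rw [if_neg]
          rintro ⟨h1, h2⟩
          exact hd2 (Nat.mem_divisors.mpr ⟨Nat.dvd_gcd h1 h2,
            fun h => hi0 (Nat.eq_zero_of_gcd_eq_zero_left h)⟩)
      rw [hgij, Finset.mul_sum, Finset.mul_sum]
      refine Finset.sum_congr rfl fun d _ => ?_
      have hconj : (starRingEnd ℂ) ((μ (u / i) : ℤ) : ℂ) = ((μ (u / i) : ℤ) : ℂ) := by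
        simp [map_intCast]
      by_cases h1 : d ∣ i <;> by_cases h2 : d ∣ j <;>
        simp [h1, h2, hconj]
    rw [Finset.sum_congr rfl step1, Finset.sum_comm]
    have step2 : ∀ d ∈ U.divisors,
        (∑ i ∈ u.divisors, ∑ j ∈ v.divisors,
          (if d ∣ i then ((μ (u / i) : ℤ) : ℂ) else 0) *
          ((if d ∣ j then ((μ (v / j) : ℤ) : ℂ) else 0) * (g d : ℂ)))
        = (if d = u then 1 else 0) * ((if d = v then 1 else 0) * (g d : ℂ)) := by
      intro d _
      rw [← sum_moebius_indicator u d hu0, ← sum_moebius_indicator v d hv0,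
        Finset.sum_mul, Finset.sum_mul]
      refine Finset.sum_congr rfl fun i _ => ?_
      rw [Finset.mul_sum]
    rw [Finset.sum_congr rfl step2]
    by_cases huv : u = v
    · subst huv
      rw [if_pos rfl, Finset.sum_eq_single u]
      · simp
      · intro d _ hdu
        simp [hdu]
      · intro h
        exact absurd (Nat.mem_divisors.mpr ⟨huU, hU0⟩) h
    · rw [if_neg huv]
      refine Finset.sum_eq_zero fun d _ => ?_
      by_cases h1 : d = u
      · rw [if_neg (fun h2 : d = v => huv (h1 ▸ h2))]; ring
      · rw [if_neg h1]; ring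
  have hne : ∀ u : ℕ, u ∣ U → f' u ≠ 0 := by
    intro u huU h
    have := hmain u u huU huU
    rw [h, inner_zero_left, if_pos rfl] at this
    exact (hg u huU).ne' (by exact_mod_cast this.symm)
  refine ⟨hmain, hne, ?_⟩
  refine linearIndependent_of_ne_zero_of_inner_eq_zero
    (fun i => hne i.1 i.2) fun i j hij => ?_
  have := hmain i.1 j.1 i.2 j.2
  rwa [if_neg (fun h => hij (Subtype.ext h))] at this
end

section
/- Let ψ be a Dirichlet character (of any modulus), extended to ℤ in the usual completely multiplicative way, let q be a positive integer, and let z ∈ ℍ. Then ∑_{n ∈ ℤ} ψ(n)·c_q(n)·e(n²z) = ∑_{j ∣ q} μ(q/j)·j·ψ(j)·θ_ψ(j²z), where both series converge absolutely. -/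
open Complex ArithmeticFunction
open scoped ArithmeticFunction.Moebius

/-- `e(z) = exp(2πiz)`. -/
noncomputable def eC (z : ℂ) : ℂ := Complex.exp (2 * Real.pi * Complex.I * z)

/-- Ramanujan's sum `c_q(n) = ∑_{d ∣ (q,n)} μ(q/d) d` for an integer `n`. -/
def ramanujanSum (q : ℕ) (n : ℤ) : ℤ :=
  ∑ d ∈ (Nat.gcd q n.natAbs).divisors, (μ (q / d) : ℤ) * (d : ℤ)

/-- `θ_ψ(z) = ∑_{n ∈ ℤ} ψ(n) e(n² z)`. -/
noncomputable def thetaPsi {N : ℕ} (ψ : DirichletCharacter ℂ N) (z : ℂ) : ℂ :=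
  ∑' n : ℤ, ψ ((n : ZMod N)) * eC ((n : ℂ) ^ 2 * z)

lemma norm_eC_sq (n : ℤ) (w : ℂ) :
    ‖eC ((n : ℂ) ^ 2 * w)‖ = Real.exp (-(2 * Real.pi * w.im)) ^ (n.natAbs ^ 2) := by
  rw [eC, Complex.norm_exp, ← Real.exp_nat_mul]
  congr 1
  have h : ((n.natAbs ^ 2 : ℕ) : ℝ) = (n : ℝ) ^ 2 := by
    push_cast [Nat.cast_natAbs]
    rw [_root_.sq_abs]
  rw [h]
  simp [pow_two, Complex.mul_re, Complex.mul_im]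
  ring

lemma summable_rpow_natAbs {r : ℝ} (h0 : 0 ≤ r) (h1 : r < 1) :
    Summable fun n : ℤ => r ^ n.natAbs :=
  Summable.of_nat_of_neg (by simpa using summable_geometric_of_lt_one h0 h1)
    (by simpa using summable_geometric_of_lt_one h0 h1)

lemma norm_psi_eC_le {N : ℕ} (ψ : DirichletCharacter ℂ N) {w : ℂ} (hw : 0 < w.im) (n : ℤ) :
    ‖ψ ((n : ZMod N)) * eC ((n : ℂ) ^ 2 * w)‖ ≤
      Real.exp (-(2 * Real.pi * w.im)) ^ n.natAbs := by
  have h0 : (0:ℝ) ≤ Real.exp (-(2 * Real.pi * w.im)) := (Real.exp_pos _).le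
  have h1 : Real.exp (-(2 * Real.pi * w.im)) ≤ 1 :=
    Real.exp_le_one_iff.mpr (by nlinarith [Real.pi_pos])
  rw [norm_mul, norm_eC_sq]
  calc ‖ψ ((n : ZMod N))‖ * Real.exp (-(2 * Real.pi * w.im)) ^ (n.natAbs ^ 2)
      ≤ 1 * Real.exp (-(2 * Real.pi * w.im)) ^ (n.natAbs ^ 2) := by
        gcongr
        exact ψ.norm_le_one _
    _ ≤ Real.exp (-(2 * Real.pi * w.im)) ^ n.natAbs := by
        rw [one_mul]
        exact pow_le_pow_of_le_one h0 h1 (Nat.le_self_pow two_ne_zero _)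

lemma summable_psi_eC {N : ℕ} (ψ : DirichletCharacter ℂ N) {w : ℂ} (hw : 0 < w.im) :
    Summable fun n : ℤ => ‖ψ ((n : ZMod N)) * eC ((n : ℂ) ^ 2 * w)‖ := by
  have h1 : Real.exp (-(2 * Real.pi * w.im)) < 1 :=
    Real.exp_lt_one_iff.mpr (by nlinarith [Real.pi_pos])
  exact Summable.of_nonneg_of_le (fun n => norm_nonneg _)
    (fun n => norm_psi_eC_le ψ hw n) (summable_rpow_natAbs (Real.exp_pos _).le h1)

theorem theta_twist_ramanujan
    (N : ℕ) (ψ : DirichletCharacter ℂ N) (q : ℕ) (hq : 0 < q)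
    (z : ℂ) (hz : 0 < z.im) :
    (Summable fun n : ℤ =>
        ‖ψ ((n : ZMod N)) * (ramanujanSum q n : ℂ) * eC ((n : ℂ) ^ 2 * z)‖) ∧
      (∀ j ∈ q.divisors, Summable fun n : ℤ =>
        ‖ψ ((n : ZMod N)) * eC ((n : ℂ) ^ 2 * ((j : ℂ) ^ 2 * z))‖) ∧
      (∑' n : ℤ, ψ ((n : ZMod N)) * (ramanujanSum q n : ℂ) * eC ((n : ℂ) ^ 2 * z)) =
        ∑ j ∈ q.divisors, ((μ (q / j) : ℤ) : ℂ) * (j : ℂ) * ψ ((j : ZMod N)) *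
          thetaPsi ψ ((j : ℂ) ^ 2 * z) := by
  set K : ℝ := ∑ d ∈ q.divisors, (d : ℝ) with hK
  -- bound on the Ramanujan sum
  have hcq : ∀ n : ℤ, ‖(ramanujanSum q n : ℂ)‖ ≤ K := by
    intro n
    rw [Complex.norm_intCast, ← Int.cast_abs]
    have h1 : |ramanujanSum q n| ≤ ∑ d ∈ (Nat.gcd q n.natAbs).divisors, (d : ℤ) := by
      refine (Finset.abs_sum_le_sum_abs _ _).trans (Finset.sum_le_sum ?_)
      intro d hd
      rw [abs_mul, Int.abs_natCast]
      have : |(μ (q / d) : ℤ)| ≤ 1 := abs_moebius_le_one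
      nlinarith [Int.natCast_nonneg d, abs_nonneg (μ (q/d) : ℤ)]
    have h2 : (∑ d ∈ (Nat.gcd q n.natAbs).divisors, (d : ℤ)) ≤ ∑ d ∈ q.divisors, (d : ℤ) := by
      refine Finset.sum_le_sum_of_subset_of_nonneg ?_ (fun i _ _ => Int.natCast_nonneg i)
      intro d hd
      rw [Nat.mem_divisors] at hd ⊢
      exact ⟨hd.1.trans (Nat.gcd_dvd_left _ _), hq.ne'⟩
    calc ((|ramanujanSum q n| : ℤ) : ℝ) ≤ ((∑ d ∈ q.divisors, (d : ℤ) : ℤ) : ℝ) := by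
          exact_mod_cast h1.trans h2
      _ = K := by push_cast; rfl
  have hK0 : 0 ≤ K := Finset.sum_nonneg fun i _ => Nat.cast_nonneg i
  have h1 : Real.exp (-(2 * Real.pi * z.im)) < 1 :=
    Real.exp_lt_one_iff.mpr (by nlinarith [Real.pi_pos])
  have hbound : ∀ n : ℤ, ‖ψ ((n : ZMod N)) * (ramanujanSum q n : ℂ) * eC ((n : ℂ) ^ 2 * z)‖
      ≤ K * Real.exp (-(2 * Real.pi * z.im)) ^ n.natAbs := by
    intro n
    calc ‖ψ ((n : ZMod N)) * (ramanujanSum q n : ℂ) * eC ((n : ℂ) ^ 2 * z)‖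
        = ‖(ramanujanSum q n : ℂ)‖ * ‖ψ ((n : ZMod N)) * eC ((n : ℂ) ^ 2 * z)‖ := by
          rw [← norm_mul]; ring_nf
      _ ≤ K * Real.exp (-(2 * Real.pi * z.im)) ^ n.natAbs := by
          exact mul_le_mul (hcq n) (norm_psi_eC_le ψ hz n) (norm_nonneg _) hK0
  have hsum1 : Summable fun n : ℤ =>
      ‖ψ ((n : ZMod N)) * (ramanujanSum q n : ℂ) * eC ((n : ℂ) ^ 2 * z)‖ :=
    Summable.of_nonneg_of_le (fun n => norm_nonneg _) hbound
      ((summable_rpow_natAbs (Real.exp_pos _).le h1).mul_left K)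
  have himj : ∀ j ∈ q.divisors, 0 < ((j : ℂ) ^ 2 * z).im := by
    intro j hj
    have hj0 : 0 < j := Nat.pos_of_mem_divisors hj
    have : ((j : ℂ) ^ 2 * z).im = (j : ℝ) ^ 2 * z.im := by
      simp [pow_two, Complex.mul_im, Complex.mul_re]
      try ring
    rw [this]
    positivity
  refine ⟨hsum1, fun j hj => summable_psi_eC ψ (himj j hj), ?_⟩
  -- the identity
  set F : ℕ → ℤ → ℂ := fun d n =>
    if (d : ℤ) ∣ n then ((μ (q / d) : ℤ) : ℂ) * (d : ℂ) * (ψ ((n : ZMod N)) * eC ((n : ℂ) ^ 2 * z))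
    else 0 with hF
  have hterm : ∀ n : ℤ, ψ ((n : ZMod N)) * (ramanujanSum q n : ℂ) * eC ((n : ℂ) ^ 2 * z)
      = ∑ d ∈ q.divisors, F d n := by
    intro n
    have hdiv : (Nat.gcd q n.natAbs).divisors = q.divisors.filter (fun d : ℕ => (d : ℤ) ∣ n) := by
      ext d
      simp only [Nat.mem_divisors, Finset.mem_filter, Nat.dvd_gcd_iff]
      constructor
      · rintro ⟨⟨h1, h2⟩, -⟩
        refine ⟨⟨h1, hq.ne'⟩, ?_⟩
        rw [← Int.natAbs_dvd_natAbs]; simpa using h2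
      · rintro ⟨⟨h1, -⟩, h2⟩
        refine ⟨⟨h1, ?_⟩, ?_⟩
        · rw [← Int.natAbs_dvd_natAbs] at h2; simpa using h2
        · exact Nat.ne_of_gt (Nat.gcd_pos_of_pos_left _ hq)
    rw [ramanujanSum, hdiv, Finset.sum_filter]
    push_cast
    rw [Finset.mul_sum, Finset.sum_mul]
    refine Finset.sum_congr rfl fun d hd => ?_
    simp only [hF]
    by_cases hdn : (d : ℤ) ∣ n <;> simp [hdn] <;> ring
  have hsumF : ∀ d ∈ q.divisors, Summable fun n : ℤ => F d n := by
    intro d hd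
    refine Summable.of_norm (Summable.of_nonneg_of_le (fun n => norm_nonneg _)
      (fun n => ?_) (((summable_psi_eC ψ hz).mul_left
        (‖((μ (q / d) : ℤ) : ℂ) * (d : ℂ)‖))))
    simp only [hF]
    by_cases hdn : (d : ℤ) ∣ n
    · rw [if_pos hdn, norm_mul]
    · simp [hdn]
      try positivity
  calc (∑' n : ℤ, ψ ((n : ZMod N)) * (ramanujanSum q n : ℂ) * eC ((n : ℂ) ^ 2 * z))
      = ∑' n : ℤ, ∑ d ∈ q.divisors, F d n := by
        exact tsum_congr hterm
    _ = ∑ d ∈ q.divisors, ∑' n : ℤ, F d n := Summable.tsum_finsetSum hsumF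
    _ = ∑ j ∈ q.divisors, ((μ (q / j) : ℤ) : ℂ) * (j : ℂ) * ψ ((j : ZMod N)) *
          thetaPsi ψ ((j : ℂ) ^ 2 * z) := by
        refine Finset.sum_congr rfl fun d hd => ?_
        have hd0 : 0 < d := Nat.pos_of_mem_divisors hd
        have hinj : Function.Injective (fun m : ℤ => (d : ℤ) * m) :=
          fun a b h => by
            have : (d : ℤ) ≠ 0 := by exact_mod_cast hd0.ne'
            exact mul_left_cancel₀ this h
        have hsupp : Function.support (F d) ⊆ Set.range (fun m : ℤ => (d : ℤ) * m) := by
          intro n hn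
          rw [Function.mem_support, hF] at hn
          by_cases hdn : (d : ℤ) ∣ n
          · obtain ⟨m, hm⟩ := hdn
            exact ⟨m, hm.symm⟩
          · simp [hdn] at hn
        rw [← hinj.tsum_eq hsupp]
        have heval : ∀ m : ℤ, F d ((d : ℤ) * m) =
            (((μ (q / d) : ℤ) : ℂ) * (d : ℂ) * ψ ((d : ZMod N))) *
              (ψ ((m : ZMod N)) * eC ((m : ℂ) ^ 2 * ((d : ℂ) ^ 2 * z))) := by
          intro m
          simp only [hF]
          simp only [dvd_mul_right, if_pos]
          have hc1 : (((d : ℤ) * m : ℤ) : ZMod N) = ((d : ZMod N)) * ((m : ZMod N)) := by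
            push_cast; ring
          have hc2 : ((((d : ℤ) * m : ℤ) : ℂ)) ^ 2 * z = (m : ℂ) ^ 2 * ((d : ℂ) ^ 2 * z) := by
            push_cast; ring
          rw [hc1, hc2, map_mul]
          ring
        rw [tsum_congr heval, tsum_mul_left, thetaPsi]
        try ring
end
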